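/- (Tweedie's lemma, 1D version) Let p be a probability density on ℝ with finite first moment, and for α, σ > 0 define the convolved density p̃(y) = ∫ N(y | αx, σ²) p(x) dx. Suppose p̃ is differentiable with derivative obtained by differentiating under the integral sign. Then the posterior mean μ(y) = ∫ x · p(x|y) dx, where p(x|y) = N(y|αx,σ²)p(x)/p̃(y), satisfies μ(y) = (y + σ² · d/dy log p̃(y)) / α, at any y with p̃(y) > 0. -/

import Mathlib

open MeasureTheory Real

/-- Tweedie's lemma in 1D.  With `p̃(y) = ∫ N(y|αx,σ²) p(x) dx` and
posterior mean `μ(y) = ∫ x p(x|y) dx`, one has `μ(y) = (y + σ² (log p̃)'(y)) / α`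
at any `y` with `p̃(y) > 0`, assuming differentiation under the integral sign. -/
theorem stmt2 (α σ : ℝ) (hα : 0 < α) (hσ : 0 < σ)
    (p : ℝ → ℝ)
    (hp_nonneg : ∀ x, 0 ≤ p x)
    (hp_meas : Measurable p)
    (hp_int : ∫ x, p x = 1)
    (N : ℝ → ℝ → ℝ)
    (hN : ∀ y m, N y m = (2 * π * σ ^ 2) ^ (-(1 : ℝ) / 2) *
      Real.exp (-(y - m) ^ 2 / (2 * σ ^ 2)))
    (ptilde : ℝ → ℝ)
    (hptilde : ∀ y, ptilde y = ∫ x, N y (α * x) * p x)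
    (hmoment : ∀ y, Integrable (fun x => |x| * (N y (α * x) * p x)))
    (hderiv : ∀ y, HasDerivAt ptilde
      (∫ x, ((α * x - y) / σ ^ 2) * (N y (α * x) * p x)) y)
    (μpost : ℝ → ℝ)
    (hμ : ∀ y, μpost y = ∫ x, x * (N y (α * x) * p x / ptilde y)) :
    ∀ y, 0 < ptilde y →
      μpost y = (y + σ ^ 2 * (deriv (fun z => Real.log (ptilde z)) y)) / α := by
  intro y hy
  have hp_integrable : Integrable p := by
    by_contra h
    rw [integral_undef h] at hp_int
    exact one_ne_zero hp_int.symm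
  set C : ℝ := (2 * π * σ ^ 2) ^ (-(1 : ℝ) / 2) with hC
  have hCpos : 0 < C := Real.rpow_pos_of_pos (by positivity) _
  set f : ℝ → ℝ := fun x => N y (α * x) * p x with hf
  have hfN : ∀ x, f x = C * Real.exp (-(y - α * x) ^ 2 / (2 * σ ^ 2)) * p x := by
    intro x; simp [hf, hN]
  have hf_nonneg : ∀ x, 0 ≤ f x := by
    intro x; rw [hfN]
    exact mul_nonneg (mul_nonneg hCpos.le (Real.exp_nonneg _)) (hp_nonneg x)
  have hfmeas : Measurable f := by
    have : f = fun x => C * Real.exp (-(y - α * x) ^ 2 / (2 * σ ^ 2)) * p x :=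
      funext hfN
    rw [this]
    have h1 : Measurable fun x : ℝ => -(y - α * x) ^ 2 / (2 * σ ^ 2) := by fun_prop
    exact (h1.exp.const_mul C).mul hp_meas
  have hf_int : Integrable f := by
    refine Integrable.mono' (hp_integrable.const_mul C) hfmeas.aestronglyMeasurable ?_
    filter_upwards with x
    rw [Real.norm_of_nonneg (hf_nonneg x), hfN]
    have hexp : Real.exp (-(y - α * x) ^ 2 / (2 * σ ^ 2)) ≤ 1 := by
      apply Real.exp_le_one_iff.mpr
      exact div_nonpos_of_nonpos_of_nonneg (neg_nonpos.mpr (sq_nonneg _)) (by positivity)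
    calc C * Real.exp (-(y - α * x) ^ 2 / (2 * σ ^ 2)) * p x
        ≤ C * 1 * p x := by
          apply mul_le_mul_of_nonneg_right _ (hp_nonneg x)
          exact mul_le_mul_of_nonneg_left hexp hCpos.le
      _ = C * p x := by ring
  have hxf_int : Integrable (fun x => x * f x) := by
    refine Integrable.mono' (hmoment y) ((measurable_id.mul hfmeas).aestronglyMeasurable) ?_
    filter_upwards with x
    rw [Real.norm_eq_abs, abs_mul, abs_of_nonneg (hf_nonneg x)]
  set I1 : ℝ := ∫ x, x * f x with hI1
  have hD : (∫ x, ((α * x - y) / σ ^ 2) * f x)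
      = (α * I1 - y * ptilde y) / σ ^ 2 := by
    have heq : ∀ x, ((α * x - y) / σ ^ 2) * f x
        = (α / σ ^ 2) * (x * f x) - (y / σ ^ 2) * f x := by
      intro x; field_simp
    simp_rw [heq]
    rw [integral_sub (hxf_int.const_mul _) (hf_int.const_mul _),
      MeasureTheory.integral_const_mul, MeasureTheory.integral_const_mul, hptilde y]
    field_simp
    rfl
  have hlog : HasDerivAt (fun z => Real.log (ptilde z))
      ((∫ x, ((α * x - y) / σ ^ 2) * f x) / ptilde y) y :=
    (hderiv y).log hy.ne'
  rw [hlog.deriv, hD, hμ y]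
  have hμval : (∫ x, x * (f x / ptilde y)) = I1 / ptilde y := by
    simp_rw [mul_div_assoc']
    rw [integral_div]
  rw [hμval]
  field_simp
  ring
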